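/- Let a, b, c be integers with a > 0, a ∣ b and b ∣ c, and let ω = a·(e₁∧e₂) + b·(e₃∧e₄) + c·(e₅∧e₆) ∈ ⋀²(ℤ⁶). Then the torsion subgroup of the quotient abelian group ⋀²(ℤ⁶)/⟨ω⟩ (the quotient by the subgroup generated by ω) is a finite group of order a. -/

import Mathlib

open ExteriorAlgebra

/-- The image in the exterior algebra of the `i`-th standard basis vector of `ℤⁿ`. -/
noncomputable def e {n : ℕ} (i : Fin n) : ExteriorAlgebra ℤ (Fin n → ℤ) :=
  ι ℤ (Pi.single i 1)

/-- The element `ω = a·(e₁∧e₂) + b·(e₃∧e₄) + c·(e₅∧e₆)` of the exterior algebra. -/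
noncomputable def omeg (a b c : ℤ) : ExteriorAlgebra ℤ (Fin 6 → ℤ) :=
  a • (e 0 * e 1) + b • (e 2 * e 3) + c • (e 4 * e 5)

lemma mem_two (v w : Fin 6 → ℤ) : ι ℤ v * ι ℤ w ∈ ⋀[ℤ]^2 (Fin 6 → ℤ) := by
  rw [show (⋀[ℤ]^2 (Fin 6 → ℤ)) = LinearMap.range (ι ℤ (M := Fin 6 → ℤ)) *
    LinearMap.range (ι ℤ (M := Fin 6 → ℤ)) from sq _]
  exact Submodule.mul_mem_mul (LinearMap.mem_range_self _ v) (LinearMap.mem_range_self _ w)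

lemma omeg_mem (a b c : ℤ) : omeg a b c ∈ ⋀[ℤ]^2 (Fin 6 → ℤ) :=
  Submodule.add_mem _
    (Submodule.add_mem _ (Submodule.smul_mem _ _ (mem_two _ _))
      (Submodule.smul_mem _ _ (mem_two _ _)))
    (Submodule.smul_mem _ _ (mem_two _ _))

noncomputable def coordFun (i j : Fin 6) : (Fin 6 → ℤ) [⋀^Fin 2]→ₗ[ℤ] ℤ :=
  (Matrix.detRowAlternating : (Fin 2 → ℤ) [⋀^Fin 2]→ₗ[ℤ] ℤ).compLinearMap
    (LinearMap.funLeft ℤ ℤ ![i, j])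

noncomputable def psi0 (i j : Fin 6) : ExteriorAlgebra ℤ (Fin 6 → ℤ) →ₗ[ℤ] ℤ :=
  liftAlternating fun k => match k with
    | 2 => coordFun i j
    | _ => 0

lemma ι_mul_eq_ιMulti (v w : Fin 6 → ℤ) :
    ι ℤ v * ι ℤ w = ιMulti ℤ 2 ![v, w] := by
  simp [ιMulti_apply, List.ofFn_succ]

lemma psi0_apply (i j : Fin 6) (v w : Fin 6 → ℤ) :
    psi0 i j (ι ℤ v * ι ℤ w) = v i * w j - v j * w i := by
  rw [ι_mul_eq_ιMulti, psi0, liftAlternating_apply_ιMulti]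
  simp [coordFun]
  exact (Matrix.det_fin_two _).trans (by simp [LinearMap.funLeft_apply])

lemma ι_eq_sum (v : Fin 6 → ℤ) :
    (ι ℤ v : ExteriorAlgebra ℤ (Fin 6 → ℤ)) = ∑ i, v i • e i := by
  conv_lhs => rw [show v = ∑ i, v i • Pi.single i (1:ℤ) by
    ext j; simp [Pi.single_apply, Finset.sum_ite_eq]]
  simp only [map_sum, map_smul, e]

lemma e_swap (i j : Fin 6) : e j * e i = -(e i * e j) :=
  eq_neg_of_add_eq_zero_left (by rw [add_comm]; exact ι_add_mul_swap _ _)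

lemma e_sq (i : Fin 6) : e i * e i = 0 := ι_sq_zero _

set_option maxRecDepth 100000 in
set_option maxHeartbeats 2000000 in
lemma key_expand (v w : Fin 6 → ℤ) :
    (ι ℤ v * ι ℤ w : ExteriorAlgebra ℤ (Fin 6 → ℤ)) =
      (v 0 * w 1 - v 1 * w 0) • (e 0 * e 1) +
      (v 0 * w 2 - v 2 * w 0) • (e 0 * e 2) +
      (v 0 * w 3 - v 3 * w 0) • (e 0 * e 3) +
      (v 0 * w 4 - v 4 * w 0) • (e 0 * e 4) +
      (v 0 * w 5 - v 5 * w 0) • (e 0 * e 5) +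
      (v 1 * w 2 - v 2 * w 1) • (e 1 * e 2) +
      (v 1 * w 3 - v 3 * w 1) • (e 1 * e 3) +
      (v 1 * w 4 - v 4 * w 1) • (e 1 * e 4) +
      (v 1 * w 5 - v 5 * w 1) • (e 1 * e 5) +
      (v 2 * w 3 - v 3 * w 2) • (e 2 * e 3) +
      (v 2 * w 4 - v 4 * w 2) • (e 2 * e 4) +
      (v 2 * w 5 - v 5 * w 2) • (e 2 * e 5) +
      (v 3 * w 4 - v 4 * w 3) • (e 3 * e 4) +
      (v 3 * w 5 - v 5 * w 3) • (e 3 * e 5) +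
      (v 4 * w 5 - v 5 * w 4) • (e 4 * e 5) := by
  rw [ι_eq_sum v, ι_eq_sum w, Finset.sum_mul_sum]
  simp only [smul_mul_smul_comm, Fin.sum_univ_six]
  simp only [e_swap 0 1, e_swap 0 2, e_swap 0 3, e_swap 0 4, e_swap 0 5, e_swap 1 2, e_swap 1 3, e_swap 1 4, e_swap 1 5, e_swap 2 3, e_swap 2 4, e_swap 2 5, e_swap 3 4, e_swap 3 5, e_swap 4 5,
    e_sq 0, e_sq 1, e_sq 2, e_sq 3, e_sq 4, e_sq 5]
  module

set_option maxRecDepth 100000 in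
set_option maxHeartbeats 1000000 in
lemma decomp (x : ExteriorAlgebra ℤ (Fin 6 → ℤ)) (hx : x ∈ ⋀[ℤ]^2 (Fin 6 → ℤ)) :
    x = (psi0 0 1 x) • (e 0 * e 1) +
      (psi0 0 2 x) • (e 0 * e 2) +
      (psi0 0 3 x) • (e 0 * e 3) +
      (psi0 0 4 x) • (e 0 * e 4) +
      (psi0 0 5 x) • (e 0 * e 5) +
      (psi0 1 2 x) • (e 1 * e 2) +
      (psi0 1 3 x) • (e 1 * e 3) +
      (psi0 1 4 x) • (e 1 * e 4) +
      (psi0 1 5 x) • (e 1 * e 5) +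
      (psi0 2 3 x) • (e 2 * e 3) +
      (psi0 2 4 x) • (e 2 * e 4) +
      (psi0 2 5 x) • (e 2 * e 5) +
      (psi0 3 4 x) • (e 3 * e 4) +
      (psi0 3 5 x) • (e 3 * e 5) +
      (psi0 4 5 x) • (e 4 * e 5) := by
  rw [← ιMulti_span_fixedDegree] at hx
  induction hx using Submodule.span_induction with
  | mem y hy =>
    obtain ⟨v, rfl⟩ := hy
    rw [show ιMulti ℤ 2 v = ι ℤ (v 0) * ι ℤ (v 1) by
      simp [ιMulti_apply, List.ofFn_succ, Matrix.vecTail, Function.comp]]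
    simp only [psi0_apply]
    exact key_expand _ _
  | zero => simp
  | add y z hy hz ihy ihz =>
    simp only [map_add, add_smul]
    conv_lhs => rw [ihy, ihz]
    abel
  | smul c y hy ih =>
    simp only [map_smul, smul_eq_mul, mul_smul]
    conv_lhs => rw [ih]
    simp only [smul_add]

lemma eq_zero_of_smul_eq_zero (c : ℤ) (hc : c ≠ 0) (x : ⋀[ℤ]^2 (Fin 6 → ℤ))
    (h : c • x = 0) : x = 0 := by
  have hv : c • (x : ExteriorAlgebra ℤ (Fin 6 → ℤ)) = 0 := congrArg Subtype.val h
  have hz : ∀ i j : Fin 6, psi0 i j (x : ExteriorAlgebra ℤ (Fin 6 → ℤ)) = 0 := by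
    intro i j
    have h2 := congrArg (psi0 i j) hv
    rw [map_smul, map_zero, smul_eq_mul] at h2
    exact (mul_eq_zero.1 h2).resolve_left hc
  have hd := decomp x x.2
  simp only [hz, zero_smul, add_zero] at hd
  exact Subtype.ext (by simpa using hd)

instance : NoZeroSMulDivisors ℤ (⋀[ℤ]^2 (Fin 6 → ℤ)) :=
  ⟨fun h => or_iff_not_imp_left.2 fun hc => eq_zero_of_smul_eq_zero _ hc _ h⟩

lemma psi0_e_mul_e (i j k l : Fin 6) :
    psi0 i j (e k * e l) =
      (if j = l then if i = k then 1 else 0 else 0) -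
      (if i = l then if j = k then 1 else 0 else 0) := by
  simp [e, psi0_apply, Pi.single_apply]

/-- If `a > 0`, `a ∣ b` and `b ∣ c`, then the torsion subgroup of the quotient of
`⋀²(ℤ⁶)` by the subgroup generated by `ω = a·(e₁∧e₂) + b·(e₃∧e₄) + c·(e₅∧e₆)` is
finite of order `a`. -/
theorem torsion_of_quotient (a b c : ℤ) (ha : 0 < a) (hab : a ∣ b) (hbc : b ∣ c) :
    (Nat.card (Submodule.torsion ℤ
      ((⋀[ℤ]^2 (Fin 6 → ℤ)) ⧸
        Submodule.span ℤ {(⟨omeg a b c, omeg_mem a b c⟩ : ⋀[ℤ]^2 (Fin 6 → ℤ))})) : ℤ) = a := by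
  obtain ⟨b', rfl⟩ := hab
  obtain ⟨c', rfl⟩ := hbc
  set M := ⋀[ℤ]^2 (Fin 6 → ℤ) with hM
  set ωel : M := ⟨omeg a (a * b') (a * b' * c'), omeg_mem _ _ _⟩ with hωel
  set p := Submodule.span ℤ {ωel} with hp
  set ω₀ : M := ⟨omeg 1 b' (b' * c'), omeg_mem _ _ _⟩ with hω₀
  have hsmul : a • ω₀ = ωel := by
    apply Subtype.ext
    show a • omeg 1 b' (b' * c') = omeg a (a * b') (a * b' * c')
    simp only [omeg, smul_add, smul_smul, mul_one, mul_assoc]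
  let φ : M →ₗ[ℤ] ℤ := (psi0 0 1) ∘ₗ (Submodule.subtype _)
  have hφω₀ : φ ω₀ = 1 := by
    show psi0 0 1 (omeg 1 b' (b' * c')) = 1
    simp only [omeg, map_add, map_smul, psi0_e_mul_e]
    simp only [Fin.reduceEq, if_true, if_false, reduceIte, smul_eq_mul]
    ring
  have hω₀ne : ω₀ ≠ 0 := by
    intro h
    rw [h, map_zero] at hφω₀
    exact zero_ne_one hφω₀
  let g : ℤ →ₗ[ℤ] (M ⧸ p) := p.mkQ ∘ₗ LinearMap.toSpanSingleton ℤ M ω₀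
  have hg : ∀ n : ℤ, g n = p.mkQ (n • ω₀) := fun n => rfl
  have hane : a ≠ 0 := ha.ne'
  have hker : LinearMap.ker g = Submodule.span ℤ {a} := by
    ext n
    rw [LinearMap.mem_ker, hg, Submodule.mkQ_apply, Submodule.Quotient.mk_eq_zero, hp,
      Submodule.mem_span_singleton, Submodule.mem_span_singleton]
    constructor
    · rintro ⟨m, hm⟩
      rw [← hsmul, smul_smul] at hm
      have h1 : (m * a - n) • ω₀ = 0 := by rw [sub_smul, hm, sub_self]
      have h2 : m * a - n = 0 := (smul_eq_zero.1 h1).resolve_right hω₀ne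
      exact ⟨m, by rw [smul_eq_mul, ← sub_eq_zero]; exact h2⟩
    · rintro ⟨m, rfl⟩
      exact ⟨m, by rw [← hsmul, smul_smul, smul_eq_mul]⟩
  have hωp : ωel ∈ p := Submodule.mem_span_singleton_self _
  have hrange : LinearMap.range g = Submodule.torsion ℤ (M ⧸ p) := by
    ext x
    rw [LinearMap.mem_range, Submodule.mem_torsion_iff]
    constructor
    · rintro ⟨n, rfl⟩
      refine ⟨⟨a, mem_nonZeroDivisors_of_ne_zero hane⟩, ?_⟩
      show a • g n = 0
      rw [hg, ← map_smul, smul_comm a n ω₀, hsmul, Submodule.mkQ_apply, Submodule.Quotient.mk_eq_zero]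
      exact Submodule.smul_mem _ _ hωp
    · rintro ⟨⟨n, hn⟩, hnx⟩
      obtain ⟨y, rfl⟩ := p.mkQ_surjective x
      have hn0 : n ≠ 0 := nonZeroDivisors.ne_zero hn
      have hny : n • y ∈ p := by
        rwa [show (⟨n, hn⟩ : nonZeroDivisors ℤ) • p.mkQ y = p.mkQ (n • y) from rfl,
          Submodule.mkQ_apply, Submodule.Quotient.mk_eq_zero] at hnx
      rw [hp, Submodule.mem_span_singleton] at hny
      obtain ⟨m, hm⟩ := hny
      rw [← hsmul, smul_smul] at hm
      have hφ : m * a = n * φ y := by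
        have h3 := congrArg φ hm
        rwa [map_smul, map_smul, hφω₀, smul_eq_mul, smul_eq_mul, mul_one] at h3
      have heq : n • (φ y • ω₀) = n • y := by rw [smul_smul, ← hφ, hm]
      have hy0 : n • (φ y • ω₀ - y) = 0 := by rw [smul_sub, heq, sub_self]
      have h4 : φ y • ω₀ - y = 0 := (smul_eq_zero.1 hy0).resolve_left hn0
      have hyy : φ y • ω₀ = y := by rwa [sub_eq_zero] at h4
      exact ⟨φ y, by rw [hg, hyy]⟩
  have e1 : (Submodule.torsion ℤ (M ⧸ p)) ≃ₗ[ℤ] LinearMap.range g :=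
    LinearEquiv.ofEq _ _ hrange.symm
  have e2 : (ℤ ⧸ LinearMap.ker g) ≃ₗ[ℤ] LinearMap.range g := g.quotKerEquivRange
  have e3 : (ℤ ⧸ LinearMap.ker g) ≃ₗ[ℤ] ℤ ⧸ (Submodule.span ℤ {a}) :=
    Submodule.quotEquivOfEq _ _ hker
  have e4 := Int.quotientSpanEquivZMod a
  have hcard : Nat.card (Submodule.torsion ℤ (M ⧸ p)) = Nat.card (ZMod a.natAbs) :=
    Nat.card_congr ((e1.toEquiv.trans e2.symm.toEquiv).trans
      (e3.toEquiv.trans e4.toEquiv))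
  rw [hcard, Nat.card_zmod]
  exact Int.natAbs_of_nonneg ha.le
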